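/- Suppose c, p : Fin 3 × Fin 3 → ZMod n with pairwise distinct i, j, k satisfy c j j + p i j = c j k + p j k (alignment (19)), c k i + p k i = c k k + p j k (alignment (22)), and c i i + p k i = c i k + p k k (part of (16)), together with the separability requirement c i j + p i j ≠ c i k + p k k (inter-user condition (12)). Then c i i + c j j + c k k ≠ c i j + c j k + c k i in ZMod n. -/
import Mathlib

theorem constraint_ix_from_cond12 (n : ℕ) (c p : Fin 3 × Fin 3 → ZMod n)
    (i j k : Fin 3) (hij : i ≠ j) (hjk : j ≠ k) (hik : i ≠ k)
    (h19 : c (j, j) + p (i, j) = c (j, k) + p (j, k))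
    (h22 : c (k, i) + p (k, i) = c (k, k) + p (j, k))
    (h16 : c (i, i) + p (k, i) = c (i, k) + p (k, k))
    (hsep : c (i, j) + p (i, j) ≠ c (i, k) + p (k, k)) :
    c (i, i) + c (j, j) + c (k, k) ≠ c (i, j) + c (j, k) + c (k, i) := by
  intro h
  apply hsep
  linear_combination h19 - h22 + h16 - h
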